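/- For probability densities f₁, f₂ on ℝᵈ with equal priors 1/2, the Henze-Penrose upper bound on the Bayes error rate is tighter than the Jensen-Shannon upper bound: ∫ f₁f₂/(f₁+f₂) dx ≤ (1/4)∫ [f₁·log₂(1 + f₂/f₁) + f₂·log₂(1 + f₁/f₂)] dx. -/

import Mathlib

open MeasureTheory Real

noncomputable def Gfun (s : ℝ) : ℝ :=
  2 * Real.log 2 * s ^ 2 - ((1 + s) * Real.log (1 + s) + (1 - s) * Real.log (1 - s))

noncomputable def Gd (s : ℝ) : ℝ :=
  4 * Real.log 2 * s - Real.log (1 + s) + Real.log (1 - s)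

noncomputable def Gdd (s : ℝ) : ℝ :=
  4 * Real.log 2 - (1 / (1 + s) + 1 / (1 - s))

lemma hasDerivAt_Gfun {s : ℝ} (h1 : -1 < s) (h2 : s < 1) :
    HasDerivAt Gfun (Gd s) s := by
  have h1' : (0:ℝ) < 1 + s := by linarith
  have h2' : (0:ℝ) < 1 - s := by linarith
  have ha : HasDerivAt (fun s : ℝ => 1 + s) 1 s := (hasDerivAt_id s).const_add 1
  have hb : HasDerivAt (fun s : ℝ => 1 - s) (-1) s := (hasDerivAt_id s).const_sub 1
  have hla : HasDerivAt (fun s : ℝ => Real.log (1 + s)) (1 / (1 + s)) s := by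
    simpa [Function.comp_def] using (Real.hasDerivAt_log h1'.ne').comp s ha
  have hlb : HasDerivAt (fun s : ℝ => Real.log (1 - s)) (-(1 / (1 - s))) s := by
    have := (Real.hasDerivAt_log h2'.ne').comp s hb
    simpa [div_eq_mul_inv, Function.comp_def] using this
  have h1m : HasDerivAt (fun s : ℝ => (1 + s) * Real.log (1 + s))
      (1 * Real.log (1 + s) + (1 + s) * (1 / (1 + s))) s := ha.mul hla
  have h2m : HasDerivAt (fun s : ℝ => (1 - s) * Real.log (1 - s))
      ((-1) * Real.log (1 - s) + (1 - s) * (-(1 / (1 - s)))) s := hb.mul hlb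
  have hsq : HasDerivAt (fun s : ℝ => 2 * Real.log 2 * s ^ 2)
      (2 * Real.log 2 * (2 * s)) s := by
    simpa using ((hasDerivAt_pow 2 s).const_mul (2 * Real.log 2))
  have := hsq.sub (h1m.add h2m)
  refine this.congr_deriv ?_
  unfold Gd
  field_simp
  ring

lemma hasDerivAt_Gd {s : ℝ} (h1 : -1 < s) (h2 : s < 1) :
    HasDerivAt Gd (Gdd s) s := by
  have h1' : (0:ℝ) < 1 + s := by linarith
  have h2' : (0:ℝ) < 1 - s := by linarith
  have ha : HasDerivAt (fun s : ℝ => 1 + s) 1 s := (hasDerivAt_id s).const_add 1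
  have hb : HasDerivAt (fun s : ℝ => 1 - s) (-1) s := (hasDerivAt_id s).const_sub 1
  have hla : HasDerivAt (fun s : ℝ => Real.log (1 + s)) (1 / (1 + s)) s := by
    simpa [Function.comp_def] using (Real.hasDerivAt_log h1'.ne').comp s ha
  have hlb : HasDerivAt (fun s : ℝ => Real.log (1 - s)) (-(1 / (1 - s))) s := by
    have := (Real.hasDerivAt_log h2'.ne').comp s hb
    simpa [div_eq_mul_inv, Function.comp_def] using this
  have hlin : HasDerivAt (fun s : ℝ => 4 * Real.log 2 * s) (4 * Real.log 2) s := by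
    simpa using (hasDerivAt_id s).const_mul (4 * Real.log 2)
  have := (hlin.sub hla).add hlb
  refine this.congr_deriv ?_
  unfold Gdd
  ring

lemma cont_Gfun : Continuous Gfun := by
  have h1 : Continuous (fun s : ℝ => (1 + s) * Real.log (1 + s)) :=
    Real.continuous_mul_log.comp (continuous_const.add continuous_id)
  have h2 : Continuous (fun s : ℝ => (1 - s) * Real.log (1 - s)) :=
    Real.continuous_mul_log.comp (continuous_const.sub continuous_id)
  exact ((continuous_const.mul (continuous_pow 2)).sub (h1.add h2))

lemma Gfun_one : Gfun 1 = 0 := by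
  have : (1:ℝ) + 1 = 2 := by norm_num
  simp [Gfun, this]

lemma Gfun_nonneg {s : ℝ} (h0 : 0 ≤ s) (h1 : s ≤ 1) : 0 ≤ Gfun s := by
  have hL : (0.6931471803 : ℝ) < Real.log 2 := Real.log_two_gt_d9
  set L := Real.log 2 with hLdef
  have h1c : (0:ℝ) < 1 - 1 / (2 * L) := by
    rw [sub_pos, div_lt_one (by linarith)]
    linarith
  obtain ⟨c, hc0, hc2⟩ : ∃ c : ℝ, 0 ≤ c ∧ c ^ 2 = 1 - 1 / (2 * L) :=
    ⟨Real.sqrt (1 - 1 / (2 * L)), Real.sqrt_nonneg _, Real.sq_sqrt h1c.le⟩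
  have hinv : (0:ℝ) < 1 / (2 * L) := by positivity
  have hc1 : c < 1 := by nlinarith
  -- Gdd nonneg on Ioo 0 c
  have hGdd_nonneg : ∀ x ∈ Set.Ioo (0:ℝ) c, 0 ≤ Gdd x := by
    intro x hx
    obtain ⟨hx0, hxc⟩ := hx
    have hx1 : x < 1 := lt_trans hxc hc1
    have h1p : (0:ℝ) < 1 + x := by linarith
    have h1m : (0:ℝ) < 1 - x := by linarith
    have hsq : x ^ 2 < c ^ 2 := by nlinarith
    have hxx : 1 / (2 * L) < 1 - x ^ 2 := by nlinarith
    have hne : (1:ℝ) - x ^ 2 ≠ 0 := by nlinarith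
    have e : 1 / (1 + x) + 1 / (1 - x) = 2 / (1 - x ^ 2) := by
      rw [div_add_div _ _ h1p.ne' h1m.ne']
      rw [div_eq_div_iff (by positivity) (by nlinarith : (0:ℝ) < 1 - x ^ 2).ne']
      ring
    have hxx' : 1 < (1 - x ^ 2) * (2 * L) := (div_lt_iff₀ (by linarith)).1 hxx
    unfold Gdd
    rw [e, sub_nonneg, div_le_iff₀ (by nlinarith)]
    rw [hLdef] at hxx'
    nlinarith
  -- Gdd nonpos on Ioo c 1
  have hGdd_nonpos : ∀ x ∈ Set.Ioo c (1:ℝ), Gdd x ≤ 0 := by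
    intro x hx
    obtain ⟨hxc, hx1⟩ := hx
    have hx0 : 0 ≤ x := le_trans hc0 hxc.le
    have h1p : (0:ℝ) < 1 + x := by linarith
    have h1m : (0:ℝ) < 1 - x := by linarith
    have hsq : c ^ 2 < x ^ 2 := by nlinarith
    have hxx : 1 - x ^ 2 < 1 / (2 * L) := by nlinarith
    have hpos : (0:ℝ) < 1 - x ^ 2 := by nlinarith
    have e : 1 / (1 + x) + 1 / (1 - x) = 2 / (1 - x ^ 2) := by
      rw [div_add_div _ _ h1p.ne' h1m.ne']
      rw [div_eq_div_iff (by positivity) hpos.ne']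
      ring
    have hxx' : (1 - x ^ 2) * (2 * L) < 1 := (lt_div_iff₀ (by linarith)).1 hxx
    unfold Gdd
    rw [e, sub_nonpos, le_div_iff₀ hpos]
    rw [hLdef] at hxx'
    nlinarith
  -- Gd monotone on Icc 0 c, hence nonneg there
  have hGd_mono : MonotoneOn Gd (Set.Icc 0 c) := by
    apply monotoneOn_of_hasDerivWithinAt_nonneg (convex_Icc 0 c)
      (f' := Gdd)
    · intro x hx
      have hx1 : x < 1 := lt_of_le_of_lt hx.2 hc1
      exact (hasDerivAt_Gd (by linarith [hx.1]) hx1).continuousAt.continuousWithinAt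
    · intro x hx
      rw [interior_Icc] at hx
      have hx1 : x < 1 := lt_trans hx.2 hc1
      exact (hasDerivAt_Gd (by linarith [hx.1]) hx1).hasDerivWithinAt
    · intro x hx
      rw [interior_Icc] at hx
      exact hGdd_nonneg x hx
  have hGd0 : Gd 0 = 0 := by simp [Gd]
  have hGd_nonneg : ∀ x ∈ Set.Ioo (0:ℝ) c, 0 ≤ Gd x := by
    intro x hx
    have := hGd_mono (Set.left_mem_Icc.2 hc0) ⟨hx.1.le, hx.2.le⟩ hx.1.le
    rwa [hGd0] at this
  -- Gfun monotone on Icc 0 c, hence nonneg there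
  have hG_mono : MonotoneOn Gfun (Set.Icc 0 c) := by
    apply monotoneOn_of_hasDerivWithinAt_nonneg (convex_Icc 0 c)
      cont_Gfun.continuousOn (f' := Gd)
    · intro x hx
      rw [interior_Icc] at hx
      have hx1 : x < 1 := lt_trans hx.2 hc1
      exact (hasDerivAt_Gfun (by linarith [hx.1]) hx1).hasDerivWithinAt
    · intro x hx
      rw [interior_Icc] at hx
      exact hGd_nonneg x hx
  have hG0 : Gfun 0 = 0 := by simp [Gfun]
  have hG_nonneg_left : ∀ x ∈ Set.Icc (0:ℝ) c, 0 ≤ Gfun x := by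
    intro x hx
    have := hG_mono (Set.left_mem_Icc.2 hc0) hx hx.1
    rwa [hG0] at this
  -- Gfun concave on Icc c 1
  have hconc : ConcaveOn ℝ (Set.Icc c 1) Gfun := by
    apply concaveOn_of_hasDerivWithinAt2_nonpos (convex_Icc c 1)
      cont_Gfun.continuousOn (f' := Gd) (f'' := Gdd)
    · intro x hx
      rw [interior_Icc] at hx
      exact (hasDerivAt_Gfun (by linarith [hc0, hx.1]) hx.2).hasDerivWithinAt
    · intro x hx
      rw [interior_Icc] at hx
      exact (hasDerivAt_Gd (by linarith [hc0, hx.1]) hx.2).hasDerivWithinAt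
    · intro x hx
      rw [interior_Icc] at hx
      exact hGdd_nonpos x hx
  rcases le_total s c with hsc | hcs
  · exact hG_nonneg_left s ⟨h0, hsc⟩
  · have hmem : s ∈ segment ℝ c 1 := by
      rw [segment_eq_Icc hc1.le]
      exact ⟨hcs, h1⟩
    have := hconc.ge_on_segment (x := c) (y := (1:ℝ)) (Set.left_mem_Icc.2 hc1.le)
      (Set.right_mem_Icc.2 hc1.le) hmem
    have hGc : 0 ≤ Gfun c := hG_nonneg_left c ⟨hc0, le_refl c⟩
    rw [Gfun_one] at this
    exact le_trans (le_min hGc (le_refl 0)) this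

lemma Gfun_even (s : ℝ) : Gfun (-s) = Gfun s := by
  unfold Gfun
  ring_nf

lemma Gfun_nonneg' {s : ℝ} (h1 : -1 ≤ s) (h2 : s ≤ 1) : 0 ≤ Gfun s := by
  rcases le_total 0 s with h | h
  · exact Gfun_nonneg h h2
  · rw [← Gfun_even]
    exact Gfun_nonneg (by linarith) (by linarith)

lemma pointwise_ineq {a b : ℝ} (ha : 0 ≤ a) (hb : 0 ≤ b) :
    a * b / (a + b) ≤
      (1 / 4) * (a * Real.logb 2 (1 + b / a) + b * Real.logb 2 (1 + a / b)) := by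
  rcases eq_or_lt_of_le ha with ha0 | ha
  · simp [← ha0]
  rcases eq_or_lt_of_le hb with hb0 | hb
  · simp [← hb0]
  have ht : (0:ℝ) < a + b := by linarith
  have hL : (0:ℝ) < Real.log 2 := Real.log_pos (by norm_num)
  set L := Real.log 2 with hLdef
  set A := Real.log a with hA
  set B := Real.log b with hB
  set T := Real.log (a + b) with hT
  have hs1 : (-1:ℝ) ≤ (a - b) / (a + b) := by
    rw [le_div_iff₀ ht]
    linarith
  have hs2 : (a - b) / (a + b) ≤ 1 := by
    rw [div_le_one ht]
    linarith
  have hG := Gfun_nonneg' hs1 hs2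
  have e1 : 1 + (a - b) / (a + b) = 2 * a / (a + b) := by
    field_simp
    ring
  have e2 : 1 - (a - b) / (a + b) = 2 * b / (a + b) := by
    field_simp
    ring
  have l1 : Real.log (2 * a / (a + b)) = L + A - T := by
    rw [Real.log_div (by positivity) ht.ne', Real.log_mul two_ne_zero ha.ne']
  have l2 : Real.log (2 * b / (a + b)) = L + B - T := by
    rw [Real.log_div (by positivity) ht.ne', Real.log_mul two_ne_zero hb.ne']
  have hpoly : (a + b) ^ 2 * Gfun ((a - b) / (a + b)) =
      2 * L * (a - b) ^ 2 -
        (a + b) * (2 * a * (L + A - T) + 2 * b * (L + B - T)) := by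
    unfold Gfun
    rw [e1, e2, l1, l2]
    rw [← hLdef]
    field_simp
  have h2 : 0 ≤ 2 * L * (a - b) ^ 2 -
      (a + b) * (2 * a * (L + A - T) + 2 * b * (L + B - T)) := by
    rw [← hpoly]
    exact mul_nonneg (by positivity) hG
  have l3 : 1 + b / a = (a + b) / a := by field_simp
  have l4 : 1 + a / b = (a + b) / b := by field_simp; ring
  rw [l3, l4]
  have l5 : Real.logb 2 ((a + b) / a) = (T - A) / L := by
    rw [Real.logb, Real.log_div ht.ne' ha.ne']
  have l6 : Real.logb 2 ((a + b) / b) = (T - B) / L := by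
    rw [Real.logb, Real.log_div ht.ne' hb.ne']
  rw [l5, l6]
  have hRHS : (1 / 4) * (a * ((T - A) / L) + b * ((T - B) / L)) =
      (a * (T - A) + b * (T - B)) / (4 * L) := by
    field_simp
  rw [hRHS, div_le_div_iff₀ ht (by positivity)]
  linarith [h2]

lemma term_nonneg {a b : ℝ} (ha : 0 ≤ a) (hb : 0 ≤ b) :
    0 ≤ a * Real.logb 2 (1 + b / a) := by
  apply mul_nonneg ha
  apply Real.logb_nonneg (by norm_num)
  have : 0 ≤ b / a := by positivity
  linarith

lemma term_le {a b : ℝ} (ha : 0 ≤ a) (hb : 0 ≤ b) :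
    a * Real.logb 2 (1 + b / a) ≤ b / Real.log 2 := by
  have hL : (0:ℝ) < Real.log 2 := Real.log_pos (by norm_num)
  rcases eq_or_lt_of_le ha with ha0 | ha
  · rw [← ha0]
    simp
    positivity
  have hba : 0 ≤ b / a := by positivity
  have hlog : Real.log (1 + b / a) ≤ b / a :=
    le_trans (Real.log_le_sub_one_of_pos (by linarith)) (by linarith)
  have key : a * Real.log (1 + b / a) ≤ b := by
    calc a * Real.log (1 + b / a) ≤ a * (b / a) :=
          mul_le_mul_of_nonneg_left hlog ha.le
      _ = b := by field_simp
  rw [Real.logb, mul_div_assoc']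
  exact (div_le_div_iff_of_pos_right hL).2 key

theorem stmt_9 {d : ℕ} (f₁ f₂ : (Fin d → ℝ) → ℝ)
    (hm₁ : Measurable f₁) (hm₂ : Measurable f₂)
    (hnn₁ : ∀ x, 0 ≤ f₁ x) (hnn₂ : ∀ x, 0 ≤ f₂ x)
    (hi₁ : Integrable f₁) (hi₂ : Integrable f₂)
    (hI₁ : ∫ x, f₁ x = 1) (hI₂ : ∫ x, f₂ x = 1) :
    ∫ x, f₁ x * f₂ x / (f₁ x + f₂ x) ≤
      (1 / 4) * ∫ x, (f₁ x * Real.logb 2 (1 + f₂ x / f₁ x) +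
        f₂ x * Real.logb 2 (1 + f₁ x / f₂ x)) := by
  have hL : (0:ℝ) < Real.log 2 := Real.log_pos (by norm_num)
  set g : (Fin d → ℝ) → ℝ := fun x =>
    f₁ x * Real.logb 2 (1 + f₂ x / f₁ x) + f₂ x * Real.logb 2 (1 + f₁ x / f₂ x)
    with hg
  set h : (Fin d → ℝ) → ℝ := fun x => f₁ x * f₂ x / (f₁ x + f₂ x) with hh
  have h_nonneg : ∀ x, 0 ≤ h x := fun x => by
    have := hnn₁ x; have := hnn₂ x
    positivity
  have h_le : ∀ x, h x ≤ f₁ x := by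
    intro x
    have h1 := hnn₁ x; have h2 := hnn₂ x
    rcases eq_or_lt_of_le (by linarith : (0:ℝ) ≤ f₁ x + f₂ x) with h0 | h0
    · have e1 : f₁ x = 0 := by linarith
      simp [hh, e1]
    · rw [hh]
      simp only
      rw [div_le_iff₀ h0]
      nlinarith
  have h_meas : Measurable h := (hm₁.mul hm₂).div (hm₁.add hm₂)
  have h_int : Integrable h := by
    apply hi₁.mono h_meas.aestronglyMeasurable
    filter_upwards with x
    rw [Real.norm_eq_abs, Real.norm_eq_abs,
      abs_of_nonneg (h_nonneg x), abs_of_nonneg (hnn₁ x)]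
    exact h_le x
  have g_nonneg : ∀ x, 0 ≤ g x := fun x =>
    add_nonneg (term_nonneg (hnn₁ x) (hnn₂ x)) (term_nonneg (hnn₂ x) (hnn₁ x))
  have g_le : ∀ x, g x ≤ (f₁ x + f₂ x) / Real.log 2 := by
    intro x
    have := term_le (hnn₁ x) (hnn₂ x)
    have := term_le (hnn₂ x) (hnn₁ x)
    rw [hg]
    simp only
    rw [add_div]
    linarith
  have g_meas : Measurable g := by
    have m1 : Measurable fun x => Real.logb 2 (1 + f₂ x / f₁ x) := by
      show Measurable fun x => Real.log (1 + f₂ x / f₁ x) / Real.log 2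
      exact (Real.measurable_log.comp (measurable_const.add (hm₂.div hm₁))).div_const _
    have m2 : Measurable fun x => Real.logb 2 (1 + f₁ x / f₂ x) := by
      show Measurable fun x => Real.log (1 + f₁ x / f₂ x) / Real.log 2
      exact (Real.measurable_log.comp (measurable_const.add (hm₁.div hm₂))).div_const _
    exact (hm₁.mul m1).add (hm₂.mul m2)
  have g_int : Integrable g := by
    apply ((hi₁.add hi₂).div_const (Real.log 2)).mono g_meas.aestronglyMeasurable
    filter_upwards with x
    have hb : (0:ℝ) ≤ (f₁ x + f₂ x) / Real.log 2 := by
      have := hnn₁ x; have := hnn₂ x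
      positivity
    rw [Real.norm_eq_abs, Real.norm_eq_abs, Pi.add_apply,
      abs_of_nonneg (g_nonneg x), abs_of_nonneg hb]
    exact g_le x
  calc ∫ x, h x ≤ ∫ x, (1 / 4) * g x :=
        integral_mono h_int (g_int.const_mul _) fun x =>
          pointwise_ineq (hnn₁ x) (hnn₂ x)
    _ = (1 / 4) * ∫ x, g x := MeasureTheory.integral_const_mul _ _
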